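/- For 2-type Swap Schelling Games on a cycle with n ≥ 3 vertices, o = 2α + β orange agents (α ∈ ℕ, β ∈ {0,1}, 2 ≤ o ≤ b = n − o), the Price of Anarchy equals (n−2)/(b+β): the optimal social welfare is n − 2, and every swap equilibrium has social welfare at least b + β, with this bound attained. -/

import Mathlib

open SimpleGraph Finset
open scoped Classical

noncomputable def ssgUtil {V A : Type*} [Fintype V] [DecidableEq V]
    (G : SimpleGraph V) [DecidableRel G.Adj]
    {k : ℕ} (c : A → Fin k) (σ : A ≃ V) (i : A) : ℚ :=
  (((G.neighborFinset (σ i)).filter (fun v => c (σ.symm v) = c i)).card : ℚ) /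
    (G.degree (σ i) : ℚ)

def ssgSwap {V A : Type*} [DecidableEq V] (σ : A ≃ V) (i j : A) : A ≃ V :=
  σ.trans (Equiv.swap (σ i) (σ j))

def ssgProfitable {V A : Type*} [Fintype V] [DecidableEq V]
    (G : SimpleGraph V) [DecidableRel G.Adj]
    {k : ℕ} (c : A → Fin k) (σ : A ≃ V) (i j : A) : Prop :=
  c i ≠ c j ∧
    ssgUtil G c σ i < ssgUtil G c (ssgSwap σ i j) i ∧
    ssgUtil G c σ j < ssgUtil G c (ssgSwap σ i j) j

def ssgEquilibrium {V A : Type*} [Fintype V] [DecidableEq V]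
    (G : SimpleGraph V) [DecidableRel G.Adj]
    {k : ℕ} (c : A → Fin k) (σ : A ≃ V) : Prop :=
  ∀ i j : A, ¬ ssgProfitable G c σ i j

def ssgLocalEquilibrium {V A : Type*} [Fintype V] [DecidableEq V]
    (G : SimpleGraph V) [DecidableRel G.Adj]
    {k : ℕ} (c : A → Fin k) (σ : A ≃ V) : Prop :=
  ∀ i j : A, G.Adj (σ i) (σ j) → ¬ ssgProfitable G c σ i j

noncomputable def ssgWelfare {V A : Type*} [Fintype V] [DecidableEq V] [Fintype A]
    (G : SimpleGraph V) [DecidableRel G.Adj]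
    {k : ℕ} (c : A → Fin k) (σ : A ≃ V) : ℚ :=
  ∑ i : A, ssgUtil G c σ i

noncomputable def ssgPhi {V A : Type*} [Fintype V] [DecidableEq V]
    (G : SimpleGraph V) [DecidableRel G.Adj]
    {k : ℕ} (c : A → Fin k) (σ : A ≃ V) : ℕ :=
  (G.edgeFinset.filter (fun e => ∀ u ∈ e, ∀ v ∈ e, c (σ.symm u) = c (σ.symm v))).card


noncomputable instance (n : ℕ) : DecidableRel (SimpleGraph.cycleGraph n).Adj :=
  Classical.decRel _

set_option linter.unusedSectionVars false
namespace SSG13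
open Fin.CommRing
variable {n : ℕ} [NeZero n]

noncomputable def ind (x y : Fin 2) : ℚ := if x = y then 1 else 0

lemma ind_nonneg (x y : Fin 2) : 0 ≤ ind x y := by unfold ind; split <;> norm_num
lemma ind_le_one (x y : Fin 2) : ind x y ≤ 1 := by unfold ind; split <;> norm_num
lemma ind_eq_one {x y : Fin 2} (h : x = y) : ind x y = 1 := by simp [ind, h]
lemma ind_eq_zero {x y : Fin 2} (h : x ≠ y) : ind x y = 0 := by simp [ind, h]
lemma ind_comm (x y : Fin 2) : ind x y = ind y x := by simp [ind, eq_comm]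

lemma half_le_aux (x y : Fin 2) : 1 / 2 ≤ (ind x y + 1) / 2 := by
  have := ind_nonneg x y; linarith

lemma fin2cases (x : Fin 2) : x = 0 ∨ x = 1 := by omega
lemma fin2ne {x : Fin 2} (h : x ≠ 0) : x = 1 := by omega
lemma fin2ne' {x : Fin 2} (h : x ≠ 1) : x = 0 := by omega

variable (hn : 3 ≤ n)
include hn

lemma natcast_nz {a : ℕ} (h0 : 0 < a) (h1 : a < n) : (a : Fin n) ≠ 0 := by
  rw [Ne, Fin.natCast_eq_zero]
  intro hd
  exact absurd (Nat.le_of_dvd h0 hd) (by omega)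

lemma natcast_inj {a b : ℕ} (ha : a < n) (hb : b < n) : (a : Fin n) = (b : Fin n) ↔ a = b := by
  rw [Fin.ext_iff, Fin.val_natCast, Fin.val_natCast, Nat.mod_eq_of_lt ha, Nat.mod_eq_of_lt hb]

lemma add_natcast_inj (v : Fin n) {a b : ℕ} (ha : a < n) (hb : b < n) :
    v + (a : Fin n) = v + (b : Fin n) ↔ a = b := by
  rw [add_right_inj, natcast_inj hn ha hb]

lemma sub_one_eq (v : Fin n) : v - 1 = v + ((n - 1 : ℕ) : Fin n) := by
  have h : ((n - 1 : ℕ) : Fin n) + 1 = 0 := by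
    have h2 : ((n - 1 : ℕ) : Fin n) + ((1 : ℕ) : Fin n) = ((n : ℕ) : Fin n) := by
      rw [← Nat.cast_add]; congr 1; omega
    simpa using h2
  rw [sub_eq_iff_eq_add, add_assoc, h, add_zero]

lemma one_eq (v : Fin n) : v + 1 = v + ((1 : ℕ) : Fin n) := by norm_num

lemma self_eq (v : Fin n) : v = v + ((0 : ℕ) : Fin n) := by norm_num

lemma one_ne_zero' : (1 : Fin n) ≠ 0 := by
  have := natcast_nz hn (a := 1) one_pos (by omega)
  simpa using this

lemma sub_one_ne (v : Fin n) : v - 1 ≠ v := by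
  rw [Ne, sub_eq_self]; exact one_ne_zero' hn

lemma add_one_ne (v : Fin n) : v + 1 ≠ v := by
  rw [Ne, add_eq_left]; exact one_ne_zero' hn

lemma sub_ne_add (v : Fin n) : v - 1 ≠ v + 1 := by
  intro h
  rw [sub_one_eq hn, one_eq hn] at h
  have := (add_natcast_inj hn v (a := n - 1) (b := 1) (by omega) (by omega)).mp h
  omega

lemma nbr (v : Fin n) :
    (SimpleGraph.cycleGraph n).neighborFinset v = {v - 1, v + 1} := by
  ext w
  rw [mem_neighborFinset, cycleGraph_adj']
  have h1 : ((1 : Fin n) : ℕ) = 1 := by rw [Fin.val_one', Nat.mod_eq_of_lt (by omega)]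
  have e1 : ((v - w : Fin n) : ℕ) = 1 ↔ v - w = 1 := by rw [Fin.ext_iff, h1]
  have e2 : ((w - v : Fin n) : ℕ) = 1 ↔ w - v = 1 := by rw [Fin.ext_iff, h1]
  rw [e1, e2, Finset.mem_insert, Finset.mem_singleton]
  constructor
  · rintro (h | h)
    · left; rw [← sub_sub_cancel v w, h]
    · right; rw [← sub_add_cancel w v, h, add_comm]
  · rintro (h | h)
    · left; rw [h]; exact sub_sub_cancel v 1
    · right; rw [h]; simp

lemma deg (v : Fin n) : (SimpleGraph.cycleGraph n).degree v = 2 := by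
  rw [SimpleGraph.degree, nbr hn, Finset.card_pair (sub_ne_add hn v)]

omit hn in
lemma card_filter_pair (p : Fin n → Prop) [DecidablePred p] {a b : Fin n} (h : a ≠ b) :
    (({a, b} : Finset (Fin n)).filter p).card
      = (if p a then 1 else 0) + (if p b then 1 else 0) := by
  rw [Finset.filter_insert, Finset.filter_singleton]
  split_ifs <;> simp [Finset.card_insert_of_notMem, h, *]

/-- utility formula on the cycle in terms of a vertex-coloring `d`. -/
lemma util_formula (c : Fin n → Fin 2) (σ : Fin n ≃ Fin n) (i : Fin n)
    (d : Fin n → Fin 2) (hd : ∀ w, c (σ.symm w) = d w) :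
    ssgUtil (SimpleGraph.cycleGraph n) c σ i
      = (ind (d (σ i - 1)) (d (σ i)) + ind (d (σ i + 1)) (d (σ i))) / 2 := by
  unfold ssgUtil
  rw [nbr hn, deg hn]
  have hci : c i = d (σ i) := by rw [← hd (σ i), Equiv.symm_apply_apply]
  rw [card_filter_pair _ (sub_ne_add hn (σ i))]
  simp only [hd, hci]
  unfold ind
  split_ifs <;> norm_num

/-- welfare in terms of a vertex coloring. -/
noncomputable def W (d : Fin n → Fin 2) : ℚ := ∑ v : Fin n, ind (d v) (d (v + 1))

def Brk (d : Fin n → Fin 2) : Finset (Fin n) :=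
  Finset.univ.filter (fun v => d v ≠ d (v + 1))

lemma welfare_formula (c : Fin n → Fin 2) (σ : Fin n ≃ Fin n)
    (d : Fin n → Fin 2) (hd : ∀ w, c (σ.symm w) = d w) :
    ssgWelfare (SimpleGraph.cycleGraph n) c σ = W d := by
  unfold ssgWelfare
  have h1 : ∀ i, ssgUtil (SimpleGraph.cycleGraph n) c σ i
      = (ind (d (σ i - 1)) (d (σ i)) + ind (d (σ i + 1)) (d (σ i))) / 2 :=
    fun i => util_formula hn c σ i d hd
  simp only [h1]
  rw [Equiv.sum_comp σ
    (fun v => (ind (d (v - 1)) (d v) + ind (d (v + 1)) (d v)) / 2)]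
  have h2 : ∑ v : Fin n, (ind (d (v - 1)) (d v) + ind (d (v + 1)) (d v)) / 2
      = ((∑ v : Fin n, ind (d (v - 1)) (d v)) + ∑ v : Fin n, ind (d (v + 1)) (d v)) / 2 := by
    rw [← Finset.sum_add_distrib, ← Finset.sum_div]
  rw [h2]
  have h3 : ∑ v : Fin n, ind (d (v - 1)) (d v) = ∑ v : Fin n, ind (d v) (d (v + 1)) := by
    rw [← Equiv.sum_comp (Equiv.addRight (1 : Fin n))
      (fun v => ind (d (v - 1)) (d v))]
    apply Finset.sum_congr rfl
    intro v _
    simp only [Equiv.coe_addRight, add_sub_cancel_right]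
  have h4 : ∑ v : Fin n, ind (d (v + 1)) (d v) = ∑ v : Fin n, ind (d v) (d (v + 1)) := by
    apply Finset.sum_congr rfl
    intro v _
    exact ind_comm _ _
  rw [h3, h4]
  unfold W
  ring

omit hn in
lemma W_eq_card (d : Fin n → Fin 2) : W d = (n : ℚ) - (Brk d).card := by
  unfold W Brk
  have h1 : ∀ v : Fin n, ind (d v) (d (v + 1)) = 1 - (if d v ≠ d (v + 1) then (1 : ℚ) else 0) := by
    intro v
    unfold ind
    split_ifs <;> norm_num <;> tauto
  simp only [h1]
  rw [Finset.sum_sub_distrib, Finset.sum_const, Finset.sum_boole]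
  simp only [Finset.card_univ, Fintype.card_fin, nsmul_eq_mul, mul_one]

omit hn in
lemma card_fiber (c : Fin n → Fin 2) (σ : Fin n ≃ Fin n) (x : Fin 2) :
    (Finset.univ.filter (fun v : Fin n => c (σ.symm v) = x)).card
      = (Finset.univ.filter (fun i : Fin n => c i = x)).card := by
  apply Finset.card_bij' (fun v _ => σ.symm v) (fun i _ => σ i)
  · intro a ha; simp only [Finset.mem_filter, Finset.mem_univ, true_and] at ha ⊢; exact ha
  · intro a ha; simp only [Finset.mem_filter, Finset.mem_univ, true_and] at ha ⊢
    rw [Equiv.symm_apply_apply]; exact ha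
  · intro a _; simp
  · intro a _; simp

omit hn in
lemma exists_flip (d : Fin n → Fin 2) (x : Fin 2)
    (hu : ∃ u, d u = x) (hw : ∃ w, d w ≠ x) :
    ∃ v, d v = x ∧ d (v + 1) ≠ x := by
  by_contra hcon
  push_neg at hcon
  obtain ⟨u, hu⟩ := hu
  obtain ⟨w, hw⟩ := hw
  have key : ∀ k : ℕ, d (u + (k : Fin n)) = x := by
    intro k
    induction k with
    | zero => simpa using hu
    | succ m ih =>
        have : u + ((m + 1 : ℕ) : Fin n) = (u + (m : Fin n)) + 1 := by
          push_cast; ring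
        rw [this]
        exact hcon _ ih
  have : d w = x := by
    have := key (w - u).val
    rwa [Fin.cast_val_eq_self, add_sub_cancel] at this
  exact hw this

omit hn in
lemma exists_perm (c d : Fin n → Fin 2)
    (h : (Finset.univ.filter (fun v : Fin n => d v = 0)).card
        = (Finset.univ.filter (fun i : Fin n => c i = 0)).card) :
    ∃ σ : Fin n ≃ Fin n, ∀ v, c (σ.symm v) = d v := by
  have hc0 : Fintype.card {v : Fin n // d v = 0} = Fintype.card {i : Fin n // c i = 0} := by
    rw [Fintype.card_subtype, Fintype.card_subtype, h]
  have hc1 : Fintype.card {v : Fin n // ¬ d v = 0} = Fintype.card {i : Fin n // ¬ c i = 0} := by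
    rw [Fintype.card_subtype_compl, Fintype.card_subtype_compl, hc0]
  let e0 : {v : Fin n // d v = 0} ≃ {i : Fin n // c i = 0} := Fintype.equivOfCardEq hc0
  let e1 : {v : Fin n // ¬ d v = 0} ≃ {i : Fin n // ¬ c i = 0} := Fintype.equivOfCardEq hc1
  let e : Equiv.Perm (Fin n) := Equiv.subtypeCongr e0 e1
  refine ⟨e.symm, fun v => ?_⟩
  have he : e v = if hv : d v = 0 then (e0 ⟨v, hv⟩ : Fin n) else (e1 ⟨v, hv⟩ : Fin n) := by
    by_cases hv : d v = 0 <;> simp [e, Equiv.subtypeCongr, hv]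
  rw [Equiv.symm_symm]
  rw [he]
  by_cases hv : d v = 0
  · rw [dif_pos hv, (e0 ⟨v, hv⟩).2, hv]
  · rw [dif_neg hv, fin2ne hv, fin2ne (e1 ⟨v, hv⟩).2]

def Tr (d : Fin n → Fin 2) : Finset (Fin n) :=
  Finset.univ.filter (fun v => d v = 0 ∧ d (v + 1) = 1)

def Tr' (d : Fin n → Fin 2) : Finset (Fin n) :=
  Finset.univ.filter (fun v => d v = 1 ∧ d (v + 1) = 0)

omit hn in
lemma brk_card (d : Fin n → Fin 2) : (Brk d).card = (Tr d).card + (Tr' d).card := by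
  have he : Brk d = Tr d ∪ Tr' d := by
    ext v
    simp only [Brk, Tr, Tr', Finset.mem_union, Finset.mem_filter, Finset.mem_univ, true_and]
    rcases fin2cases (d v) with h | h <;> rcases fin2cases (d (v + 1)) with h' | h' <;>
      simp [h, h']
  rw [he, Finset.card_union_of_disjoint]
  rw [Finset.disjoint_left]
  intro a ha ha'
  simp only [Tr, Tr', Finset.mem_filter, Finset.mem_univ, true_and] at ha ha'
  rw [ha.1] at ha'
  exact absurd ha'.1 (by decide)

omit hn in
lemma tr_eq_tr' (d : Fin n → Fin 2) : (Tr d).card = (Tr' d).card := by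
  classical
  set A : Finset (Fin n) := Finset.univ.filter (fun v => d v = 0) with hA
  set A' : Finset (Fin n) := Finset.univ.filter (fun v => d (v + 1) = 0) with hA'
  have hTr : Tr d = A \ A' := by
    ext v
    simp only [Tr, hA, hA', Finset.mem_sdiff, Finset.mem_filter, Finset.mem_univ, true_and]
    constructor
    · rintro ⟨h0, h1⟩; exact ⟨h0, by rw [h1]; decide⟩
    · rintro ⟨h0, h1⟩; exact ⟨h0, fin2ne h1⟩
  have hTr' : Tr' d = A' \ A := by
    ext v
    simp only [Tr', hA, hA', Finset.mem_sdiff, Finset.mem_filter, Finset.mem_univ, true_and]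
    constructor
    · rintro ⟨h0, h1⟩; exact ⟨h1, by rw [h0]; decide⟩
    · rintro ⟨h0, h1⟩; exact ⟨fin2ne h1, h0⟩
  have hAA : A.card = A'.card := by
    refine Finset.card_bij' (fun v _ => v - 1) (fun v _ => v + 1) ?_ ?_ ?_ ?_
    · intro a ha
      simp only [hA, hA', Finset.mem_filter, Finset.mem_univ, true_and] at ha ⊢
      rwa [sub_add_cancel]
    · intro a ha
      simp only [hA, hA', Finset.mem_filter, Finset.mem_univ, true_and] at ha ⊢
      exact ha
    · intro a _; exact sub_add_cancel a 1
    · intro a _; exact add_sub_cancel_right a 1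
  have h1 : (Tr d).card + (A ∩ A').card = A.card := by
    rw [hTr]; exact Finset.card_sdiff_add_card_inter A A'
  have h2 : (Tr' d).card + (A ∩ A').card = A'.card := by
    rw [hTr', Finset.inter_comm]; exact Finset.card_sdiff_add_card_inter A' A
  omega

lemma tr_le (d : Fin n → Fin 2)
    (hns : ∀ v, ¬(d (v - 1) = 1 ∧ d v = 0 ∧ d (v + 1) = 1)) :
    2 * (Tr d).card ≤ (Finset.univ.filter (fun v : Fin n => d v = 0)).card := by
  classical
  have hdisj : ∀ x ∈ Tr d, ∀ y ∈ Tr d, x ≠ y →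
      Disjoint ({x - 1, x} : Finset (Fin n)) {y - 1, y} := by
    intro x hx y hy hxy
    simp only [Tr, Finset.mem_filter, Finset.mem_univ, true_and] at hx hy
    rw [Finset.disjoint_left]
    intro a ha hb
    simp only [Finset.mem_insert, Finset.mem_singleton] at ha hb
    rcases ha with ha | ha <;> rcases hb with hb | hb
    · exact hxy (by rw [← sub_add_cancel x 1, ← ha, hb, sub_add_cancel])
    · have hyx : y = x - 1 := by rw [← hb, ha]
      have hc := hy.2
      rw [hyx, sub_add_cancel] at hc
      rw [hx.1] at hc; exact absurd hc (by decide)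
    · have hxb : x = y - 1 := by rw [← ha, hb]
      have hc := hx.2
      rw [hxb, sub_add_cancel] at hc
      rw [hy.1] at hc; exact absurd hc (by decide)
    · exact hxy (by rw [← ha, hb])
  have hsub : (Tr d).biUnion (fun v => ({v - 1, v} : Finset (Fin n)))
      ⊆ Finset.univ.filter (fun v : Fin n => d v = 0) := by
    intro a ha
    rw [Finset.mem_biUnion] at ha
    obtain ⟨v, hv, hav⟩ := ha
    simp only [Tr, Finset.mem_filter, Finset.mem_univ, true_and] at hv
    simp only [Finset.mem_insert, Finset.mem_singleton] at hav
    simp only [Finset.mem_filter, Finset.mem_univ, true_and]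
    rcases hav with h | h
    · subst h
      by_contra hne
      exact hns v ⟨fin2ne hne, hv.1, hv.2⟩
    · subst h; exact hv.1
  calc 2 * (Tr d).card
      = ∑ v ∈ Tr d, ({v - 1, v} : Finset (Fin n)).card := by
        rw [Finset.sum_congr rfl (fun v _ => Finset.card_pair (sub_one_ne hn v))]
        simp [mul_comm]
    _ = ((Tr d).biUnion (fun v => ({v - 1, v} : Finset (Fin n)))).card :=
        (Finset.card_biUnion hdisj).symm
    _ ≤ _ := Finset.card_le_card hsub

omit hn in
lemma ssgSwap_left {σ : Fin n ≃ Fin n} {i j : Fin n} : ssgSwap σ i j i = σ j := by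
  simp [ssgSwap, Equiv.swap_apply_left]

omit hn in
lemma ssgSwap_right {σ : Fin n ≃ Fin n} {i j : Fin n} : ssgSwap σ i j j = σ i := by
  simp [ssgSwap, Equiv.swap_apply_right]

omit hn in
lemma swap_color {c : Fin n → Fin 2} {σ : Fin n ≃ Fin n} {d : Fin n → Fin 2}
    (hd : ∀ w, c (σ.symm w) = d w) (i j : Fin n) (w : Fin n) :
    c ((ssgSwap σ i j).symm w)
      = if w = σ i then d (σ j) else if w = σ j then d (σ i) else d w := by
  have h1 : (ssgSwap σ i j).symm w = σ.symm (Equiv.swap (σ i) (σ j) w) := by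
    simp [ssgSwap, Equiv.symm_trans_apply]
  rw [h1, hd, Equiv.swap_apply_def]
  split_ifs <;> rfl

lemma no_singleton (c : Fin n → Fin 2) (σ : Fin n ≃ Fin n) (d : Fin n → Fin 2)
    (hd : ∀ w, c (σ.symm w) = d w)
    (heq : ssgEquilibrium (SimpleGraph.cycleGraph n) c σ)
    (ho2 : 2 ≤ (Finset.univ.filter (fun v : Fin n => d v = 0)).card)
    (v : Fin n) (hm : d (v - 1) = 1) (h0 : d v = 0) (hp : d (v + 1) = 1) : False := by
  classical
  -- find another orange vertex
  obtain ⟨u, hu, huv⟩ := Finset.exists_mem_ne (s := Finset.univ.filter (fun v : Fin n => d v = 0)) (by omega) v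
  rw [Finset.mem_filter] at hu
  have hu0 : d u = 0 := hu.2
  have hpos : 0 < (u - v).val := by
    rcases Nat.eq_zero_or_pos (u - v).val with h | h
    · exfalso; apply huv
      have h2 : u - v = 0 := by rw [Fin.ext_iff]; simpa using h
      rwa [sub_eq_zero] at h2
    · exact h
  have hex : ∃ k : ℕ, 0 < k ∧ d (v + (k : Fin n)) = 0 :=
    ⟨(u - v).val, hpos, by rw [Fin.cast_val_eq_self, add_sub_cancel]; exact hu0⟩
  set k := Nat.find hex with hkdef
  obtain ⟨hkpos, hk0⟩ := Nat.find_spec hex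
  rw [← hkdef] at hkpos hk0
  have hkn : k < n := by
    have h1 : k ≤ (u - v).val := Nat.find_min' hex
      ⟨hpos, by rw [Fin.cast_val_eq_self, add_sub_cancel]; exact hu0⟩
    exact lt_of_le_of_lt h1 (u - v).isLt
  have hmin : ∀ t : ℕ, 0 < t → t < k → d (v + (t : Fin n)) = 1 := by
    intro t ht htk
    apply fin2ne
    intro hcon
    exact Nat.find_min hex htk ⟨ht, hcon⟩
  have hk1 : k ≠ 1 := by
    intro h
    rw [h] at hk0
    simp only [Nat.cast_one] at hk0
    rw [hk0] at hp
    exact absurd hp (by decide)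
  have hk2' : 2 ≤ k := by omega
  -- generic distinctness facts
  have hvm1v := sub_one_ne hn v
  have hvp1v := add_one_ne hn v
  have hvm1vp1 := sub_ne_add hn v
  by_cases hk2 : k = 2
  · -- adjacent swap with v+1,  d (v+2) = 0
    have h2 : d (v + ((2 : ℕ) : Fin n)) = 0 := by rw [hk2] at hk0; exact hk0
    have e2 : v + 1 + 1 = v + ((2 : ℕ) : Fin n) := by push_cast; ring
    have h2v : v + ((2 : ℕ) : Fin n) ≠ v := by
      conv_rhs => rw [self_eq hn v]
      rw [Ne, add_natcast_inj hn v (by omega) (by omega)]; omega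
    have h2v1 : v + ((2 : ℕ) : Fin n) ≠ v + 1 := by
      rw [one_eq hn v, Ne, add_natcast_inj hn v (by omega) (by omega)]; omega
    set i := σ.symm v with hidef
    set j := σ.symm (v + 1) with hjdef
    have hσi : σ i = v := by rw [hidef, Equiv.apply_symm_apply]
    have hσj : σ j = v + 1 := by rw [hjdef, Equiv.apply_symm_apply]
    have hci : c i = d v := by rw [hidef, hd]
    have hcj : c j = d (v + 1) := by rw [hjdef, hd]
    have hD : ∀ w, c ((ssgSwap σ i j).symm w)
        = (fun w => if w = v then d (v + 1) else if w = v + 1 then d v else d w) w := by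
      intro w
      rw [swap_color hd i j w, hσi, hσj]
    have hold_i : ssgUtil (SimpleGraph.cycleGraph n) c σ i = 0 := by
      rw [util_formula hn c σ i d hd, hσi, h0, hm, hp]
      simp [ind]
    have hold_j : ssgUtil (SimpleGraph.cycleGraph n) c σ j = 0 := by
      rw [util_formula hn c σ j d hd, hσj, add_sub_cancel_right, e2, hp, h0, h2]
      simp [ind]
    have hnew_i : ssgUtil (SimpleGraph.cycleGraph n) c (ssgSwap σ i j) i = 1 / 2 := by
      rw [util_formula hn c (ssgSwap σ i j) i _ hD, ssgSwap_left, hσj]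
      simp only [add_sub_cancel_right, e2]
      simp only [if_pos rfl, if_neg h2v, if_neg h2v1, if_neg hvp1v, hp, h0, h2, eq_self_iff_true,
        if_true]
      rw [ind_eq_zero (by decide), ind_eq_one rfl]
      norm_num
    have hnew_j : ssgUtil (SimpleGraph.cycleGraph n) c (ssgSwap σ i j) j = 1 / 2 := by
      rw [util_formula hn c (ssgSwap σ i j) j _ hD, ssgSwap_right, hσi]
      simp only [if_neg hvm1v, if_neg hvm1vp1, if_neg hvp1v, if_pos rfl, hm, h0, hp,
        eq_self_iff_true, if_true]
      rw [ind_eq_one rfl, ind_eq_zero (by decide)]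
      norm_num
    refine heq i j ⟨?_, ?_, ?_⟩
    · rw [hci, hcj, h0, hp]; decide
    · rw [hold_i, hnew_i]; norm_num
    · rw [hold_j, hnew_j]; norm_num
  · -- k ≥ 3 : non-adjacent swap
    have hk3 : 3 ≤ k := by omega
    set q := v + ((k - 1 : ℕ) : Fin n) with hqdef
    have hdq : d q = 1 := hmin (k - 1) (by omega) (by omega)
    have hcast : ((k - 1 : ℕ) : Fin n) + 1 = ((k : ℕ) : Fin n) := by
      have h1 : ((k - 1 : ℕ) : Fin n) + ((1 : ℕ) : Fin n) = ((k - 1 + 1 : ℕ) : Fin n) :=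
        (Nat.cast_add _ _).symm
      simpa [show k - 1 + 1 = k by omega] using h1
    have hq1 : q + 1 = v + ((k : ℕ) : Fin n) := by rw [hqdef, add_assoc, hcast]
    have hdq1 : d (q + 1) = 0 := by rw [hq1]; exact hk0
    have hqv : q ≠ v := by
      rw [hqdef]
      conv_rhs => rw [self_eq hn v]
      rw [Ne, add_natcast_inj hn v (by omega) (by omega)]
      omega
    have hq1v : q + 1 ≠ v := by
      rw [hq1]
      conv_rhs => rw [self_eq hn v]
      rw [Ne, add_natcast_inj hn v (by omega) (by omega)]
      omega
    have hq1q : q + 1 ≠ q := add_one_ne hn q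
    have hvm1q : v - 1 ≠ q := by
      rw [sub_one_eq hn v, hqdef, Ne, add_natcast_inj hn v (by omega) (by omega)]
      omega
    have hvp1q : v + 1 ≠ q := by
      rw [one_eq hn v, hqdef, Ne, add_natcast_inj hn v (by omega) (by omega)]
      omega
    set i := σ.symm v with hidef
    set j := σ.symm q with hjdef
    have hσi : σ i = v := by rw [hidef, Equiv.apply_symm_apply]
    have hσj : σ j = q := by rw [hjdef, Equiv.apply_symm_apply]
    have hci : c i = d v := by rw [hidef, hd]
    have hcj : c j = d q := by rw [hjdef, hd]
    have hD : ∀ w, c ((ssgSwap σ i j).symm w)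
        = (fun w => if w = v then d q else if w = q then d v else d w) w := by
      intro w
      rw [swap_color hd i j w, hσi, hσj]
    have hold_i : ssgUtil (SimpleGraph.cycleGraph n) c σ i = 0 := by
      rw [util_formula hn c σ i d hd, hσi, h0, hm, hp]
      simp [ind]
    have hnew_i : 1 / 2 ≤ ssgUtil (SimpleGraph.cycleGraph n) c (ssgSwap σ i j) i := by
      rw [util_formula hn c (ssgSwap σ i j) i _ hD, ssgSwap_left, hσj]
      simp only [if_neg hqv, if_neg hq1v, if_neg hq1q, hdq1, h0, eq_self_iff_true, if_true]
      rw [ind_eq_one rfl]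
      exact half_le_aux _ _
    have hold_j : ssgUtil (SimpleGraph.cycleGraph n) c σ j ≤ 1 / 2 := by
      rw [util_formula hn c σ j d hd, hσj, hdq, hdq1]
      rw [ind_eq_zero (x := (0 : Fin 2)) (y := 1) (by decide)]
      have := ind_le_one (d (q - 1)) 1
      linarith
    have hnew_j : ssgUtil (SimpleGraph.cycleGraph n) c (ssgSwap σ i j) j = 1 := by
      rw [util_formula hn c (ssgSwap σ i j) j _ hD, ssgSwap_right, hσi]
      simp only [if_neg hvm1v, if_neg hvm1q, if_neg hvp1v, if_neg hvp1q, hm, hp, hdq,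
        eq_self_iff_true, if_true]
      rw [ind_eq_one rfl]
      norm_num
    refine heq i j ⟨?_, ?_, ?_⟩
    · rw [hci, hcj, h0, hdq]; decide
    · rw [hold_i]; linarith
    · rw [hnew_j]
      linarith

omit hn in
lemma le_half_auxL (x y : Fin 2) : ((0 : ℚ) + ind x y) / 2 ≤ 1 / 2 := by
  have := ind_le_one x y; linarith

omit hn in
lemma le_half_auxR (x y : Fin 2) : (ind x y + (0 : ℚ)) / 2 ≤ 1 / 2 := by
  have := ind_le_one x y; linarith

omit hn in
lemma half_le_auxL (x y : Fin 2) : (1 : ℚ) / 2 ≤ (1 + ind x y) / 2 := by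
  have := ind_nonneg x y; linarith

omit hn in
lemma half_le_auxR (x y : Fin 2) : (1 : ℚ) / 2 ≤ (ind x y + 1) / 2 := by
  have := ind_nonneg x y; linarith

lemma equilibrium_of_nbr (c : Fin n → Fin 2) (σ : Fin n ≃ Fin n) (d : Fin n → Fin 2)
    (hd : ∀ w, c (σ.symm w) = d w)
    (h : ∀ v : Fin n, d (v - 1) = d v ∨ d (v + 1) = d v) :
    ssgEquilibrium (SimpleGraph.cycleGraph n) c σ := by
  rintro i j ⟨hne, hi, _⟩
  have hci : c i = d (σ i) := by rw [← hd (σ i), Equiv.symm_apply_apply]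
  have hcj : c j = d (σ j) := by rw [← hd (σ j), Equiv.symm_apply_apply]
  have hvq : d (σ i) ≠ d (σ j) := by rw [← hci, ← hcj]; exact hne
  have hqv : σ j ≠ σ i := fun hh => hvq (by rw [hh])
  have hD : ∀ w, c ((ssgSwap σ i j).symm w)
      = (fun w => if w = σ i then d (σ j) else if w = σ j then d (σ i) else d w) w := by
    intro w
    rw [swap_color hd i j w]
  have hold : 1 / 2 ≤ ssgUtil (SimpleGraph.cycleGraph n) c σ i := by
    rw [util_formula hn c σ i d hd]
    rcases h (σ i) with hw | hw
    · rw [hw, ind_eq_one rfl]; exact half_le_auxL _ _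
    · rw [hw, ind_eq_one rfl]; exact half_le_auxR _ _
  have hnew : ssgUtil (SimpleGraph.cycleGraph n) c (ssgSwap σ i j) i ≤ 1 / 2 := by
    rw [util_formula hn c (ssgSwap σ i j) i _ hD, ssgSwap_left]
    simp only [if_neg hqv, eq_self_iff_true, if_true]
    rcases h (σ j) with hw | hw
    · have h1 : (if σ j - 1 = σ i then d (σ j) else if σ j - 1 = σ j then d (σ i) else d (σ j - 1))
          = d (σ j) := by
        split_ifs with ha hb
        · rfl
        · exact absurd hb (sub_one_ne hn (σ j))
        · exact hw
      rw [h1, ind_eq_zero (Ne.symm hvq)]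
      exact le_half_auxL _ _
    · have h1 : (if σ j + 1 = σ i then d (σ j) else if σ j + 1 = σ j then d (σ i) else d (σ j + 1))
          = d (σ j) := by
        split_ifs with ha hb
        · rfl
        · exact absurd hb (add_one_ne hn (σ j))
        · exact hw
      rw [h1, ind_eq_zero (Ne.symm hvq)]
      exact le_half_auxR _ _
  linarith

lemma val_add_one (v : Fin n) : (v + 1).val = if v.val = n - 1 then 0 else v.val + 1 := by
  have h1 : ((1 : Fin n) : ℕ) = 1 := by rw [Fin.val_one', Nat.mod_eq_of_lt (by omega)]
  rw [Fin.add_def, h1]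
  split_ifs with h
  · show (v.val + 1) % n = 0
    rw [h, Nat.sub_add_cancel (by omega), Nat.mod_self]
  · show (v.val + 1) % n = v.val + 1
    exact Nat.mod_eq_of_lt (by have := v.isLt; omega)

lemma val_sub_one (v : Fin n) : (v - 1).val = if v.val = 0 then n - 1 else v.val - 1 := by
  have h1 : ((1 : Fin n) : ℕ) = 1 := by rw [Fin.val_one', Nat.mod_eq_of_lt (by omega)]
  rw [Fin.sub_def]
  split_ifs with h
  · show (n - (1 : Fin n).val + v.val) % n = n - 1
    rw [h1, h, Nat.add_zero, Nat.mod_eq_of_lt (by omega)]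
  · show (n - (1 : Fin n).val + v.val) % n = v.val - 1
    have hv := v.isLt
    rw [h1]
    have h2 : n - 1 + v.val = n + (v.val - 1) := by omega
    rw [h2, Nat.add_mod_left, Nat.mod_eq_of_lt (by omega)]

omit hn in
lemma ite01_eq_zero {p : Prop} [Decidable p] : (if p then (0 : Fin 2) else 1) = 0 ↔ p := by
  split_ifs with h <;> simp [h]

omit hn in
lemma ite01_eq_one {p : Prop} [Decidable p] : (if p then (0 : Fin 2) else 1) = 1 ↔ ¬p := by
  split_ifs with h <;> simp [h]

omit hn in
lemma ite01_ne {p q : Prop} [Decidable p] [Decidable q] :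
    (if p then (0 : Fin 2) else 1) ≠ (if q then (0 : Fin 2) else 1) ↔ ¬(p ↔ q) := by
  split_ifs with h1 h2 h2 <;> simp [h1, h2]

omit hn in
lemma ite01_congr {p q : Prop} [Decidable p] [Decidable q] (h : p ↔ q) :
    (if p then (0 : Fin 2) else 1) = (if q then (0 : Fin 2) else 1) := by
  simp only [h]

omit hn in
lemma d0_card {o : ℕ} (ho : o ≤ n) :
    (Finset.univ.filter (fun v : Fin n => (if v.val < o then (0 : Fin 2) else 1) = 0)).card
      = o := by
  have hcard : (Finset.univ.filter
      (fun v : Fin n => (if v.val < o then (0 : Fin 2) else 1) = 0)).card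
      = (Finset.range o).card := by
    refine Finset.card_bij' (fun v _ => v.val) (fun r hr => ⟨r, ?_⟩) ?_ ?_ ?_ ?_
    · rw [Finset.mem_range] at hr; omega
    · intro a ha
      rw [Finset.mem_filter, ite01_eq_zero] at ha
      rw [Finset.mem_range]; exact ha.2
    · intro a ha
      rw [Finset.mem_range] at ha
      rw [Finset.mem_filter, ite01_eq_zero]
      exact ⟨Finset.mem_univ _, ha⟩
    · intro a _; rfl
    · intro a _; rfl
  rw [hcard, Finset.card_range]

lemma d0_brk {o : ℕ} (ho2 : 2 ≤ o) (hon : 2 * o ≤ n) :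
    (Brk (fun v : Fin n => if v.val < o then (0 : Fin 2) else 1)).card = 2 := by
  have hBrk : Brk (fun v : Fin n => if v.val < o then (0 : Fin 2) else 1)
      = {(⟨o - 1, by omega⟩ : Fin n), ⟨n - 1, by omega⟩} := by
    ext v
    simp only [Brk, Finset.mem_filter, Finset.mem_univ, true_and, Finset.mem_insert,
      Finset.mem_singleton, Fin.ext_iff]
    have hv := v.isLt
    have hv1 := val_add_one hn v
    by_cases hvn : v.val = n - 1
    · rw [if_pos hvn] at hv1
      have h1 : ¬(v.val < o) := by omega
      have h2 : (v + 1).val < o := by omega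
      simp only [if_neg h1, if_pos h2]
      constructor
      · intro _; right; exact hvn
      · intro _; decide
    · rw [if_neg hvn] at hv1
      by_cases h1 : v.val < o
      · by_cases h2 : (v + 1).val < o
        · simp only [if_pos h1, if_pos h2]
          constructor
          · intro h; exact absurd rfl h
          · rintro (h | h)
            · exfalso; omega
            · exact absurd h hvn
        · simp only [if_pos h1, if_neg h2]
          constructor
          · intro _; left; omega
          · intro _; decide
      · have h2 : ¬((v + 1).val < o) := by omega
        simp only [if_neg h1, if_neg h2]
        constructor
        · intro h; exact absurd rfl h
        · rintro (h | h)
          · exfalso; omega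
          · exact absurd h hvn
  rw [hBrk, Finset.card_pair]
  simp only [Ne, Fin.mk.injEq]
  omega

/-- the equilibrium configuration: α orange blocks of size two (one of size three if β = 1,
using the wrap-around position n-1), separated by blue blocks of size ≥ 2. -/
def deq (n α β : ℕ) : Fin n → Fin 2 :=
  fun v => if (v.val < 4 * α ∧ v.val % 4 < 2) ∨ (β = 1 ∧ v.val = n - 1) then 0 else 1

lemma deq_card {α β : ℕ} (hβ : β ≤ 1) (hα : 1 ≤ α) (hton : 4 * α + 2 * β ≤ n) :
    (Finset.univ.filter (fun v : Fin n => deq n α β v = 0)).card = 2 * α + β := by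
  rw [← Finset.card_range (2 * α + β)]
  refine Finset.card_bij'
    (fun v _ => if v.val < 4 * α then 2 * (v.val / 4) + v.val % 4 else 2 * α)
    (fun t ht => ⟨if t < 2 * α then 4 * (t / 2) + t % 2 else n - 1, by
      rw [Finset.mem_range] at ht; split_ifs <;> omega⟩) ?_ ?_ ?_ ?_
  · intro a ha
    simp only [Finset.mem_filter, Finset.mem_univ, true_and, deq, ite01_eq_zero] at ha
    simp only [Finset.mem_range]
    have := a.isLt
    split_ifs <;> omega
  · intro t ht
    simp only [Finset.mem_range] at ht
    simp only [Finset.mem_filter, Finset.mem_univ, true_and, deq, ite01_eq_zero]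
    split_ifs <;> omega
  · intro a ha
    simp only [Finset.mem_filter, Finset.mem_univ, true_and, deq, ite01_eq_zero] at ha
    have := a.isLt
    simp only [Fin.ext_iff]
    split_ifs <;> omega
  · intro t ht
    simp only [Finset.mem_range] at ht
    simp only []
    split_ifs <;> omega

lemma deq_nbr {α β : ℕ} (hβ : β ≤ 1) (hα : 1 ≤ α) (hton : 4 * α + 2 * β ≤ n) :
    ∀ v : Fin n, deq n α β (v - 1) = deq n α β v ∨ deq n α β (v + 1) = deq n α β v := by
  intro v
  have hv := v.isLt
  have hv1 := val_add_one hn v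
  have hv2 := val_sub_one hn v
  by_cases hx : β = 1 ∧ v.val = n - 1
  · right
    apply ite01_congr
    rw [val_add_one hn v, if_pos hx.2]
    omega
  · by_cases h4 : v.val < 4 * α
    · have hr4 : v.val % 4 = 0 ∨ v.val % 4 = 1 ∨ v.val % 4 = 2 ∨ v.val % 4 = 3 := by omega
      rcases hr4 with hr | hr | hr | hr
      · right
        apply ite01_congr
        rw [val_add_one hn v, if_neg (by omega)]
        omega
      · left
        apply ite01_congr
        rw [val_sub_one hn v, if_neg (by omega)]
        omega
      · right
        apply ite01_congr
        rw [val_add_one hn v, if_neg (by omega)]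
        omega
      · left
        apply ite01_congr
        rw [val_sub_one hn v, if_neg (by omega)]
        omega
    · left
      apply ite01_congr
      rw [val_sub_one hn v, if_neg (by omega)]
      omega

lemma deq_tr_card {α β : ℕ} (hβ : β ≤ 1) (hα : 1 ≤ α) (hton : 4 * α + 2 * β ≤ n) :
    (Tr (deq n α β)).card = α := by
  have hmem : ∀ a ∈ Tr (deq n α β), a.val < 4 * α ∧ a.val % 4 = 1 := by
    intro a ha
    simp only [Tr, Finset.mem_filter, Finset.mem_univ, true_and, deq, ite01_eq_zero,
      ite01_eq_one] at ha
    obtain ⟨h1, h2⟩ := ha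
    have hv := a.isLt
    have hv1 := val_add_one hn a
    by_cases hvn : a.val = n - 1
    · rw [if_pos hvn] at hv1
      rw [hv1] at h2
      exfalso
      omega
    · rw [if_neg hvn] at hv1
      rw [hv1] at h2
      omega
  have hcard : (Tr (deq n α β)).card = (Finset.range α).card := by
    refine Finset.card_bij' (fun v _ => v.val / 4)
      (fun t ht => ⟨4 * t + 1, by rw [Finset.mem_range] at ht; omega⟩) ?_ ?_ ?_ ?_
    · intro a ha
      have := hmem a ha
      simp only [Finset.mem_range]
      omega
    · intro t ht
      rw [Finset.mem_range] at ht
      simp only [Tr, Finset.mem_filter, Finset.mem_univ, true_and, deq, ite01_eq_zero,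
        ite01_eq_one]
      constructor
      · left; constructor <;> omega
      · have hval : ((⟨4 * t + 1, by omega⟩ : Fin n) + 1).val = 4 * t + 2 := by
          rw [val_add_one hn]
          simp only []
          rw [if_neg (by omega)]
        rw [hval]
        omega
    · intro a ha
      have := hmem a ha
      simp only [Fin.ext_iff]
      omega
    · intro t ht
      rw [Finset.mem_range] at ht
      simp only []
      omega
  rw [hcard, Finset.card_range]

end SSG13

open SSG13 in
theorem stmt13 (n o b α β : ℕ) (hn : 3 ≤ n)
    (c : Fin n → Fin 2)
    (ho : o = (Finset.univ.filter (fun i : Fin n => c i = 0)).card)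
    (hb : b = n - o) (hoab : o = 2 * α + β) (hβ : β ≤ 1)
    (ho2 : 2 ≤ o) (hmin : o ≤ b) :
    (∀ σ : Fin n ≃ Fin n,
      ssgWelfare (SimpleGraph.cycleGraph n) c σ ≤ (n : ℚ) - 2) ∧
    (∃ σ : Fin n ≃ Fin n,
      ssgWelfare (SimpleGraph.cycleGraph n) c σ = (n : ℚ) - 2) ∧
    (∀ σ : Fin n ≃ Fin n, ssgEquilibrium (SimpleGraph.cycleGraph n) c σ →
      (b : ℚ) + (β : ℚ) ≤ ssgWelfare (SimpleGraph.cycleGraph n) c σ) ∧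
    (∃ σ : Fin n ≃ Fin n, ssgEquilibrium (SimpleGraph.cycleGraph n) c σ ∧
      ssgWelfare (SimpleGraph.cycleGraph n) c σ = (b : ℚ) + (β : ℚ)) := by
  haveI : NeZero n := ⟨by omega⟩
  have hon : o ≤ n := by
    rw [ho]
    exact le_trans (Finset.card_filter_le _ _) (by simp)
  have h2on : 2 * o ≤ n := by omega
  have hα : 1 ≤ α := by omega
  have hton : 4 * α + 2 * β ≤ n := by omega
  have hfib : ∀ σ : Fin n ≃ Fin n,
      (Finset.univ.filter (fun v : Fin n => c (σ.symm v) = 0)).card = o := by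
    intro σ
    rw [card_fiber c σ 0, ← ho]
  refine ⟨?_, ?_, ?_, ?_⟩
  · -- every configuration has welfare at most n - 2
    intro σ
    rw [welfare_formula hn c σ (fun w => c (σ.symm w)) (fun w => rfl), W_eq_card]
    set d := fun w : Fin n => c (σ.symm w) with hddef
    have hcard0 : (Finset.univ.filter (fun v : Fin n => d v = 0)).card = o := hfib σ
    have hex0 : ∃ u, d u = 0 := by
      have hpos : 0 < (Finset.univ.filter (fun v : Fin n => d v = 0)).card := by omega
      obtain ⟨u, hu⟩ := Finset.card_pos.mp hpos
      exact ⟨u, (Finset.mem_filter.mp hu).2⟩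
    have hex1 : ∃ w, d w ≠ 0 := by
      by_contra hcon
      push_neg at hcon
      have hall : (Finset.univ.filter (fun v : Fin n => d v = 0)) = Finset.univ :=
        Finset.filter_eq_self.mpr (fun x _ => hcon x)
      rw [hall, Finset.card_univ, Fintype.card_fin] at hcard0
      omega
    obtain ⟨v₁, hv₁, hv₁'⟩ := exists_flip d 0 hex0 hex1
    have hex1' : ∃ u, d u = 1 := hex1.imp (fun w h => fin2ne h)
    have hex0' : ∃ w, d w ≠ 1 := hex0.imp (fun u h => by rw [h]; decide)
    obtain ⟨v₂, hv₂, hv₂'⟩ := exists_flip d 1 hex1' hex0'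
    have hne : v₁ ≠ v₂ := by
      intro h
      rw [h, hv₂] at hv₁
      exact absurd hv₁ (by decide)
    have h2le : 2 ≤ (Brk d).card := by
      apply Finset.one_lt_card.mpr
      refine ⟨v₁, ?_, v₂, ?_, hne⟩
      · simp only [Brk, Finset.mem_filter, Finset.mem_univ, true_and]
        rw [hv₁]
        exact Ne.symm hv₁'
      · simp only [Brk, Finset.mem_filter, Finset.mem_univ, true_and]
        rw [hv₂]
        exact Ne.symm hv₂'
    have hc : (2 : ℚ) ≤ ((Brk d).card : ℚ) := by exact_mod_cast h2le
    linarith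
  · -- optimum: all orange vertices consecutive
    obtain ⟨σ, hσ⟩ := exists_perm c (fun v : Fin n => if v.val < o then (0 : Fin 2) else 1)
      (by rw [d0_card hon, ← ho])
    refine ⟨σ, ?_⟩
    rw [welfare_formula hn c σ _ hσ, W_eq_card, d0_brk hn ho2 h2on]
    norm_num
  · -- every equilibrium has welfare at least b + β
    intro σ heq
    rw [welfare_formula hn c σ (fun w => c (σ.symm w)) (fun w => rfl), W_eq_card]
    set d := fun w : Fin n => c (σ.symm w) with hddef
    have hcard0 : (Finset.univ.filter (fun v : Fin n => d v = 0)).card = o := hfib σ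
    have hns : ∀ v, ¬(d (v - 1) = 1 ∧ d v = 0 ∧ d (v + 1) = 1) := by
      intro v hcon
      exact no_singleton hn c σ d (fun w => rfl) heq (by omega) v hcon.1 hcon.2.1 hcon.2.2
    have hT : 2 * (Tr d).card ≤ o := by
      rw [← hcard0]
      exact tr_le hn d hns
    have hB : (Brk d).card ≤ 2 * α := by
      rw [brk_card, ← tr_eq_tr' d]
      omega
    have hcast : ((Brk d).card : ℚ) ≤ ((2 * α : ℕ) : ℚ) := by exact_mod_cast hB
    have hbn : b + β + 2 * α = n := by omega
    have hq : ((b + β + 2 * α : ℕ) : ℚ) = (n : ℚ) := by rw [hbn]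
    push_cast at hq hcast
    linarith
  · -- an equilibrium attaining welfare b + β
    obtain ⟨σ, hσ⟩ := exists_perm c (deq n α β)
      (by rw [deq_card hn hβ hα hton, ← hoab, ← ho])
    refine ⟨σ, equilibrium_of_nbr hn c σ _ hσ (deq_nbr hn hβ hα hton), ?_⟩
    rw [welfare_formula hn c σ _ hσ, W_eq_card, brk_card, ← tr_eq_tr', deq_tr_card hn hβ hα hton]
    have hbn : b + β + 2 * α = n := by omega
    have hq : ((b + β + 2 * α : ℕ) : ℚ) = (n : ℚ) := by rw [hbn]
    push_cast at hq ⊢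
    linarith
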